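/- arXiv:2511.10273 — 8 statements merged into one kernel-verified Lean document; each statement's English description precedes it below -/
import Mathlib

section
/- Let Q be an O-compatible set of weighted local cores relative to α with total weight weight(Q) = Σ_{(w,R,K)∈Q} w. If weight(Q) ≥ v*, then every total assignment β refining α that satisfies F has objective value O(β) ≥ v*. -/
/-- Value of a literal (variable, polarity) under a total Boolean assignment. -/
def evalLit {V : Type*} (β : V → Bool) (l : V × Bool) : Bool :=
  if l.2 then β l.1 else !(β l.1)

/-- Negation of a literal. -/
def negLit {V : Type*} (l : V × Bool) : V × Bool := (l.1, !l.2)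

/-- Objective value `O(β) = Σ_{ℓ ∈ obj, β ⊨ ℓ} w(ℓ)`. -/
def objVal {V : Type*} (β : V → Bool) (obj : Finset (V × Bool)) (w : V × Bool → ℕ) : ℕ :=
  ∑ l ∈ obj, if evalLit β l then w l else 0

/-- If `Q` is an `O`-compatible set of weighted local cores relative to `α` with total
weight at least `v*`, then every total assignment `β` refining `α` that satisfies `F`
has objective value at least `v*`. Cores are triples `(w, R, K)`. -/
theorem stmt1 {V : Type*} [DecidableEq V] (F : (V → Bool) → Prop)
    (α : Set (V × Bool)) (obj : Finset (V × Bool)) (w : V × Bool → ℕ)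
    (hw : ∀ l ∈ obj, 0 < w l)
    (Q : Finset (ℕ × Finset (V × Bool) × Finset (V × Bool)))
    (hcore : ∀ q ∈ Q, (∀ l ∈ q.2.1, l ∈ α) ∧
      (∀ l ∈ q.2.2, ∃ b ∈ obj, l = negLit b) ∧
      (∀ γ : V → Bool, F γ → (∀ l ∈ q.2.1, evalLit γ l = true) →
        (∀ l ∈ q.2.2, evalLit γ l = true) → False))
    (hcompat : ∀ l ∈ obj,
      ∑ q ∈ Q.filter (fun q => negLit l ∈ q.2.2), q.1 ≤ w l)
    (vstar : ℤ)
    (hweight : ((∑ q ∈ Q, q.1 : ℕ) : ℤ) ≥ vstar) :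
    ∀ β : V → Bool, (∀ l ∈ α, evalLit β l = true) → F β →
      ((objVal β obj w : ℕ) : ℤ) ≥ vstar := by
  intro β hβα hβF
  have key : ∀ q ∈ Q, ∃ b ∈ obj, negLit b ∈ q.2.2 ∧ evalLit β b = true := by
    intro q hq
    obtain ⟨hR, hK, hU⟩ := hcore q hq
    by_contra h
    push_neg at h
    apply hU β hβF (fun l hl => hβα l (hR l hl))
    intro l hl
    obtain ⟨b, hb, rfl⟩ := hK l hl
    have hb2 : evalLit β b ≠ true := fun ht => h b hb hl ht
    rcases b with ⟨v, pb⟩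
    cases pb <;> simp [evalLit, negLit] at hb2 ⊢ <;> simp [hb2]
  have main : (∑ q ∈ Q, q.1) ≤ objVal β obj w := by
    rcases Q.eq_empty_or_nonempty with hQ | ⟨q0, hq0⟩
    · simp [hQ]
    obtain ⟨b0, hb0, -⟩ := key q0 hq0
    classical
    set f : (ℕ × Finset (V × Bool) × Finset (V × Bool)) → (V × Bool) :=
      fun q => if h : q ∈ Q then (key q h).choose else b0 with hf
    have hmaps : ∀ q ∈ Q, f q ∈ obj := by
      intro q hq
      simp only [hf, dif_pos hq]
      exact (key q hq).choose_spec.1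
    have hspec : ∀ q (hq : q ∈ Q), negLit (f q) ∈ q.2.2 ∧ evalLit β (f q) = true := by
      intro q hq
      simp only [hf, dif_pos hq]
      exact (key q hq).choose_spec.2
    rw [← Finset.sum_fiberwise_of_maps_to hmaps (fun q => q.1)]
    unfold objVal
    apply Finset.sum_le_sum
    intro b hb
    rcases Finset.eq_empty_or_nonempty (Q.filter (fun q => f q = b)) with he | ⟨q1, hq1⟩
    · simp [he]
    obtain ⟨hq1Q, hq1f⟩ := Finset.mem_filter.mp hq1
    have heval : evalLit β b = true := hq1f ▸ (hspec q1 hq1Q).2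
    rw [if_pos heval]
    calc ∑ q ∈ Q.filter (fun q => f q = b), q.1
        ≤ ∑ q ∈ Q.filter (fun q => negLit b ∈ q.2.2), q.1 := by
          apply Finset.sum_le_sum_of_subset
          intro q hq
          obtain ⟨hqQ, hqf⟩ := Finset.mem_filter.mp hq
          exact Finset.mem_filter.mpr ⟨hqQ, hqf ▸ (hspec q hqQ).1⟩
      _ ≤ w b := hcompat b hb
  calc vstar ≤ ((∑ q ∈ Q, q.1 : ℕ) : ℤ) := hweight
    _ ≤ ((objVal β obj w : ℕ) : ℤ) := by exact_mod_cast main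
end

section
/- Let Q be an O-compatible set of weighted local cores relative to α, and ℓ an objective literal unassigned by α. If residual(ℓ,Q) + weight(Q) ≥ v*, then every total assignment β refining α that satisfies F with O(β) < v* must set ℓ to false. -/
/-- Hardening: if `Q` is an `O`-compatible set of weighted local cores relative to `α`,
`ℓ` an objective literal unassigned by `α`, and `residual(ℓ,Q) + weight(Q) ≥ v*`, then
every total assignment `β` refining `α` satisfying `F` with `O(β) < v*` sets `ℓ` to false. -/
theorem stmt2 {V : Type*} [DecidableEq V] (F : (V → Bool) → Prop)
    (α : Set (V × Bool)) (obj : Finset (V × Bool)) (w : V × Bool → ℕ)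
    (hw : ∀ l ∈ obj, 0 < w l)
    (Q : Finset (ℕ × Finset (V × Bool) × Finset (V × Bool)))
    (hcore : ∀ q ∈ Q, (∀ l ∈ q.2.1, l ∈ α) ∧
      (∀ l ∈ q.2.2, ∃ b ∈ obj, l = negLit b) ∧
      (∀ γ : V → Bool, F γ → (∀ l ∈ q.2.1, evalLit γ l = true) →
        (∀ l ∈ q.2.2, evalLit γ l = true) → False))
    (hcompat : ∀ l ∈ obj,
      ∑ q ∈ Q.filter (fun q => negLit l ∈ q.2.2), q.1 ≤ w l)
    (ℓ : V × Bool) (hℓ : ℓ ∈ obj)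
    (hunassigned : ℓ ∉ α ∧ negLit ℓ ∉ α)
    (vstar : ℤ)
    (hresid : ((w ℓ : ℕ) : ℤ) - ((∑ q ∈ Q.filter (fun q => negLit ℓ ∈ q.2.2), q.1 : ℕ) : ℤ)
        + ((∑ q ∈ Q, q.1 : ℕ) : ℤ) ≥ vstar) :
    ∀ β : V → Bool, (∀ l ∈ α, evalLit β l = true) → F β →
      ((objVal β obj w : ℕ) : ℤ) < vstar → evalLit β ℓ = false := by
 -- proof
  classical
  intro β hβα hβF hlt
  by_contra hfalse
  have hℓtrue : evalLit β ℓ = true := by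
    cases h : evalLit β ℓ with
    | false => exact absurd h hfalse
    | true => rfl
  have hneg : ∀ b : V × Bool, evalLit β (negLit b) = !(evalLit β b) := by
    rintro ⟨v, c⟩; cases c <;> simp [evalLit, negLit]
  have hex : ∀ q ∈ Q, ∃ b, b ∈ obj ∧ evalLit β b = true ∧ negLit b ∈ q.2.2 := by
    intro q hq
    obtain ⟨hR, hK, hU⟩ := hcore q hq
    by_contra hcon
    push_neg at hcon
    apply hU β hβF (fun l hl => hβα l (hR l hl))
    intro l hl
    obtain ⟨b, hb, rfl⟩ := hK l hl
    rw [hneg]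
    cases h : evalLit β b with
    | true => exact absurd hl (hcon b hb h)
    | false => rfl
  set f : ℕ × Finset (V × Bool) × Finset (V × Bool) → V × Bool :=
    fun q => if h : ∃ b, b ∈ obj ∧ evalLit β b = true ∧ negLit b ∈ q.2.2 then h.choose else ℓ
    with hfdef
  have hf : ∀ q ∈ Q, f q ∈ obj ∧ evalLit β (f q) = true ∧ negLit (f q) ∈ q.2.2 := by
    intro q hq
    have h := hex q hq
    simp only [hfdef, dif_pos h]
    exact h.choose_spec
  set S : Finset (V × Bool) := obj.filter (fun b => evalLit β b = true) with hSdef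
  have hℓS : ℓ ∈ S := Finset.mem_filter.mpr ⟨hℓ, hℓtrue⟩
  have hfS : ∀ q ∈ Q, f q ∈ S := fun q hq =>
    Finset.mem_filter.mpr ⟨(hf q hq).1, (hf q hq).2.1⟩
  have key : ∑ q ∈ Q, q.1 = ∑ b ∈ S, ∑ q ∈ Q.filter (fun q => f q = b), q.1 :=
    (Finset.sum_fiberwise_of_maps_to hfS _).symm
  have hgb : ∀ b, ∑ q ∈ Q.filter (fun q => f q = b), q.1
      ≤ ∑ q ∈ Q.filter (fun q => negLit b ∈ q.2.2), q.1 := by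
    intro b
    apply Finset.sum_le_sum_of_subset
    intro q hq
    rw [Finset.mem_filter] at hq ⊢
    exact ⟨hq.1, hq.2 ▸ (hf q hq.1).2.2⟩
  have hobj : objVal β obj w = ∑ b ∈ S, w b := by
    rw [hSdef, Finset.sum_filter, objVal]
  have hsplitS : ∑ b ∈ S, w b = w ℓ + ∑ b ∈ S.erase ℓ, w b :=
    (Finset.add_sum_erase S w hℓS).symm
  have hsplitQ : ∑ b ∈ S, (∑ q ∈ Q.filter (fun q => f q = b), q.1)
      = (∑ q ∈ Q.filter (fun q => f q = ℓ), q.1)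
        + ∑ b ∈ S.erase ℓ, ∑ q ∈ Q.filter (fun q => f q = b), q.1 :=
    (Finset.add_sum_erase S _ hℓS).symm
  have herase : ∑ b ∈ S.erase ℓ, (∑ q ∈ Q.filter (fun q => f q = b), q.1)
      ≤ ∑ b ∈ S.erase ℓ, w b := by
    apply Finset.sum_le_sum
    intro b hb
    have hbobj : b ∈ obj := (Finset.mem_filter.mp (Finset.mem_of_mem_erase hb)).1
    exact le_trans (hgb b) (hcompat b hbobj)
  have hnat : w ℓ + ∑ q ∈ Q, q.1
      ≤ (∑ q ∈ Q.filter (fun q => negLit ℓ ∈ q.2.2), q.1) + objVal β obj w := by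
    rw [key, hsplitQ, hobj, hsplitS]
    have h1 := hgb ℓ
    omega
  have : ((w ℓ : ℕ) : ℤ) + ((∑ q ∈ Q, q.1 : ℕ) : ℤ)
      ≤ ((∑ q ∈ Q.filter (fun q => negLit ℓ ∈ q.2.2), q.1 : ℕ) : ℤ)
        + ((objVal β obj w : ℕ) : ℤ) := by exact_mod_cast hnat
  linarith
end

section
/- Division soundness of cutting planes: if a 0-1 assignment satisfies the normalized PB constraint Σᵢ wᵢ ℓᵢ ≥ A with all wᵢ, A nonnegative integers, and c is a positive integer, then it also satisfies Σᵢ ⌈wᵢ/c⌉ ℓᵢ ≥ ⌈A/c⌉. -/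
/-- Division soundness of cutting planes: if a 0-1 assignment (literal values `ℓ i ∈ {0,1}`)
satisfies `Σᵢ wᵢ ℓᵢ ≥ A` with nonnegative integer coefficients, and `c > 0`, then it
satisfies `Σᵢ ⌈wᵢ/c⌉ ℓᵢ ≥ ⌈A/c⌉`. -/
theorem stmt6 {ι : Type*} (s : Finset ι) (w : ι → ℕ) (A c : ℕ) (hc : 0 < c)
    (ℓ : ι → ℕ) (hℓ : ∀ i, ℓ i ≤ 1)
    (h : (A : ℤ) ≤ ∑ i ∈ s, (w i : ℤ) * ℓ i) :
    ⌈(A : ℚ) / c⌉ ≤ ∑ i ∈ s, ⌈(w i : ℚ) / c⌉ * (ℓ i : ℤ) := by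
  rw [Int.ceil_le]
  have hcq : (0:ℚ) < (c:ℚ) := by exact_mod_cast hc
  have h1 : (A : ℚ) / c ≤ (∑ i ∈ s, (w i : ℚ) * ℓ i) / c := by
    gcongr
    exact_mod_cast h
  refine h1.trans ?_
  rw [Finset.sum_div]
  push_cast
  apply Finset.sum_le_sum
  intro i _
  rw [mul_div_right_comm]
  gcongr
  exact Int.le_ceil _
end

section
/- Saturation soundness: if a 0-1 assignment satisfies the normalized PB constraint Σᵢ aᵢ ℓᵢ ≥ A with nonnegative integer coefficients aᵢ and degree A, then it also satisfies Σᵢ min(aᵢ, A) ℓᵢ ≥ A. -/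
/-- Saturation soundness: if a 0-1 assignment satisfies `Σᵢ aᵢ ℓᵢ ≥ A` with nonnegative
integer coefficients and degree, then it satisfies `Σᵢ min(aᵢ, A) ℓᵢ ≥ A`. -/
theorem stmt7 {ι : Type*} (s : Finset ι) (a : ι → ℕ) (A : ℕ)
    (ℓ : ι → ℕ) (hℓ : ∀ i, ℓ i ≤ 1)
    (h : A ≤ ∑ i ∈ s, a i * ℓ i) :
    A ≤ ∑ i ∈ s, min (a i) A * ℓ i := by
  by_cases hc : ∃ i ∈ s, A ≤ a i ∧ ℓ i = 1
  · obtain ⟨i, hi, hAa, hℓ1⟩ := hc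
    calc A = min (a i) A * ℓ i := by simp [hℓ1, min_eq_right hAa]
    _ ≤ _ := Finset.single_le_sum (fun j _ => Nat.zero_le (min (a j) A * ℓ j)) hi
  · push_neg at hc
    have : ∑ i ∈ s, min (a i) A * ℓ i = ∑ i ∈ s, a i * ℓ i := by
      apply Finset.sum_congr rfl
      intro i hi
      rcases le_or_gt A (a i) with hA | hA
      · have := hc i hi hA
        have h1 := hℓ i; interval_cases h : (ℓ i) <;> simp_all
      · rw [min_eq_left hA.le]
    omega
end

section
/- Degree interval combination: suppose for all integers A ∈ [l₁, u₁] the constraint Σ_{i>k} wᵢ bᵢ ≤ A is equivalent (over 0-1 assignments) to Σ_{i>k} wᵢ bᵢ ≤ u₁, and for all A ∈ [l₀, u₀] the constraint Σ_{i>k} wᵢ bᵢ ≤ A is equivalent to Σ_{i>k} wᵢ bᵢ ≤ u₀. Then for all A ∈ [max(l₁ + w_k, l₀), min(u₁ + w_k, u₀)], the constraint Σ_{i≥k} wᵢ bᵢ ≤ A is equivalent to Σ_{i≥k} wᵢ bᵢ ≤ min(u₁ + w_k, u₀), where the Boolean literal b_k has weight w_k ≥ 0. -/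
/-- Degree interval combination for BDD construction: if `[l₁,u₁]` and `[l₀,u₀]` are degree
intervals for `Σ_{i>k} wᵢ bᵢ`, then `[max(l₁+w_k, l₀), min(u₁+w_k, u₀)]` is a degree
interval for `Σ_{i≥k} wᵢ bᵢ`. Assignments `β` take values in `{0,1}`. -/
theorem stmt8 (n k : ℕ) (w : ℕ → ℕ) (l₀ u₀ l₁ u₁ : ℤ)
    (h₁ : ∀ A : ℤ, l₁ ≤ A → A ≤ u₁ → ∀ β : ℕ → ℕ, (∀ i, β i ≤ 1) →
      (((∑ i ∈ Finset.Icc (k+1) n, w i * β i : ℕ) : ℤ) ≤ A ↔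
        ((∑ i ∈ Finset.Icc (k+1) n, w i * β i : ℕ) : ℤ) ≤ u₁))
    (h₀ : ∀ A : ℤ, l₀ ≤ A → A ≤ u₀ → ∀ β : ℕ → ℕ, (∀ i, β i ≤ 1) →
      (((∑ i ∈ Finset.Icc (k+1) n, w i * β i : ℕ) : ℤ) ≤ A ↔
        ((∑ i ∈ Finset.Icc (k+1) n, w i * β i : ℕ) : ℤ) ≤ u₀)) :
    ∀ A : ℤ, max (l₁ + (w k : ℤ)) l₀ ≤ A → A ≤ min (u₁ + (w k : ℤ)) u₀ →
      ∀ β : ℕ → ℕ, (∀ i, β i ≤ 1) →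
      (((∑ i ∈ Finset.Icc k n, w i * β i : ℕ) : ℤ) ≤ A ↔
        ((∑ i ∈ Finset.Icc k n, w i * β i : ℕ) : ℤ) ≤ min (u₁ + (w k : ℤ)) u₀) := by
  intro A hlA hAu β hβ
  set S : ℕ := ∑ i ∈ Finset.Icc (k+1) n, w i * β i with hS
  set T : ℕ := ∑ i ∈ Finset.Icc k n, w i * β i with hT
  set m : ℤ := min (u₁ + (w k : ℤ)) u₀ with hm
  -- bounds on A and m
  have hl0A : l₀ ≤ A := le_trans (le_max_right _ _) hlA
  have hAu0 : A ≤ u₀ := le_trans hAu (min_le_right _ _)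
  have hl0m : l₀ ≤ m := le_trans hl0A hAu
  have hmu0 : m ≤ u₀ := min_le_right _ _
  have key0 : T = S ∨ (k ≤ n ∧ β k = 1 ∧ (T : ℤ) = (w k : ℤ) + S) := by
    rcases le_or_gt k n with hk | hk
    · have hsplit : T = w k * β k + S := by
        rw [hT, hS, ← Finset.Ioc_insert_left hk, Finset.sum_insert (by simp)]
        congr 1
        exact (Finset.sum_congr (by rw [Finset.Icc_add_one_left_eq_Ioc]) (fun _ _ => rfl))
      rcases Nat.le_one_iff_eq_zero_or_eq_one.mp (hβ k) with h | h
      · left; rw [hsplit, h]; ring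
      · right; exact ⟨hk, h, by rw [hsplit, h]; push_cast; ring⟩
    · left
      rw [hT, hS, Finset.Icc_eq_empty (by omega), Finset.Icc_eq_empty (by omega)]
  rcases key0 with hTS | ⟨hk, hβk, hTS⟩
  · rw [hTS]
    exact (h₀ A hl0A hAu0 β hβ).trans ((h₀ m hl0m hmu0 β hβ).symm)
  · have hl1A : l₁ ≤ A - w k := by
      have := le_trans (le_max_left _ _) hlA; omega
    have hAu1 : A - w k ≤ u₁ := by
      have := le_trans hAu (min_le_left _ _); omega
    have hl1m : l₁ ≤ m - w k := le_trans hl1A (by omega)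
    have hmu1 : m - w k ≤ u₁ := by have := min_le_left (u₁ + (w k : ℤ)) u₀; omega
    have e1 : ((T : ℤ) ≤ A ↔ (S : ℤ) ≤ A - w k) := by omega
    have e2 : ((T : ℤ) ≤ m ↔ (S : ℤ) ≤ m - w k) := by omega
    rw [e1, e2]
    exact (h₁ (A - w k) hl1A hAu1 β hβ).trans ((h₁ (m - w k) hl1m hmu1 β hβ).symm)
end

section
/- BDD node equivalence: let n = (k,l,u) be an internal BDD node labeled b_k with true-child interval [l_t,u_t] and false-child interval [l_f,u_f] satisfying l = max(l_t + w_k, l_f), u = min(u_t + w_k, u_f), where [l_t,u_t] and [l_f,u_f] are degree intervals for S_{k+1} = Σ_{i>k} wᵢbᵢ. Then for every 0-1 assignment, S_k = Σ_{i≥k} wᵢbᵢ ≤ u implies S_k ≤ l; i.e., [l,u] is a degree interval for S_k. -/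
/-- BDD node equivalence: if `[l_t,u_t]` and `[l_f,u_f]` are degree intervals for
`S_{k+1} = Σ_{i>k} wᵢ bᵢ`, and `l = max(l_t + w_k, l_f)`, `u = min(u_t + w_k, u_f)`,
then for every 0-1 assignment, `S_k ≤ u` implies `S_k ≤ l`, where `S_k = Σ_{i≥k} wᵢ bᵢ`. -/
theorem stmt14 (n k : ℕ) (w : ℕ → ℕ) (lt ut lf uf l u : ℤ)
    (hlt : lt ≤ ut) (hlf : lf ≤ uf)
    (hl : l = max (lt + (w k : ℤ)) lf) (hu : u = min (ut + (w k : ℤ)) uf)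
    (ht : ∀ A : ℤ, lt ≤ A → A ≤ ut → ∀ β : ℕ → ℕ, (∀ i, β i ≤ 1) →
      (((∑ i ∈ Finset.Icc (k+1) n, w i * β i : ℕ) : ℤ) ≤ A ↔
        ((∑ i ∈ Finset.Icc (k+1) n, w i * β i : ℕ) : ℤ) ≤ ut))
    (hf : ∀ A : ℤ, lf ≤ A → A ≤ uf → ∀ β : ℕ → ℕ, (∀ i, β i ≤ 1) →
      (((∑ i ∈ Finset.Icc (k+1) n, w i * β i : ℕ) : ℤ) ≤ A ↔
        ((∑ i ∈ Finset.Icc (k+1) n, w i * β i : ℕ) : ℤ) ≤ uf)) :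
    ∀ β : ℕ → ℕ, (∀ i, β i ≤ 1) →
      ((∑ i ∈ Finset.Icc k n, w i * β i : ℕ) : ℤ) ≤ u →
      ((∑ i ∈ Finset.Icc k n, w i * β i : ℕ) : ℤ) ≤ l := by
  intro β hβ hSu
  have hul1 : u ≤ ut + (w k : ℤ) := by simp [hu]
  have hul2 : u ≤ uf := by simp [hu]
  have hll1 : lt + (w k : ℤ) ≤ l := by simp [hl]
  have hll2 : lf ≤ l := by simp [hl]
  rcases le_or_gt k n with hkn | hkn
  · have hins : Finset.Icc k n = insert k (Finset.Icc (k+1) n) := by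
      rw [Finset.Icc_add_one_left_eq_Ioc, Finset.Ioc_insert_left hkn]
    rw [hins, Finset.sum_insert (by simp), Nat.cast_add] at hSu ⊢
    set S : ℤ := ((∑ i ∈ Finset.Icc (k+1) n, w i * β i : ℕ) : ℤ) with hS
    rcases Nat.le_one_iff_eq_zero_or_eq_one.mp (hβ k) with h0 | h1
    · rw [h0, mul_zero, Nat.cast_zero, zero_add] at hSu ⊢
      have hSuf : S ≤ uf := hSu.trans hul2
      rcases le_or_gt l uf with h' | h'
      · exact (hf l hll2 h' β hβ).mpr hSuf
      · linarith
    · rw [h1, mul_one] at hSu ⊢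
      have hSut : S ≤ ut := by linarith
      rcases le_or_gt (l - (w k : ℤ)) ut with h' | h'
      · have := (ht (l - (w k : ℤ)) (by linarith) h' β hβ).mpr hSut
        linarith
      · linarith
  · have he : Finset.Icc k n = (∅ : Finset ℕ) := Finset.Icc_eq_empty (by omega)
    have he' : Finset.Icc (k+1) n = (∅ : Finset ℕ) := Finset.Icc_eq_empty (by omega)
    rw [he] at hSu ⊢
    simp only [Finset.sum_empty, Nat.cast_zero] at hSu ⊢
    have huf : (0:ℤ) ≤ uf := le_trans hSu hul2
    have := (hf lf le_rfl hlf β hβ).mpr (by rw [he']; simpa using huf)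
    rw [he'] at this
    simp at this
    linarith
end

section
/- Shift of degree interval across skipped variables: let n = (k,l,u) be a BDD node such that S_k ≤ u and S_{k'} ≤ u are equivalent Boolean functions over 0-1 assignments, where k' < k, S_j = Σ_{i≥j} wᵢbᵢ, and let l' = l + Σ_{i=k'}^{k−1} wᵢ. Then every assignment satisfying S_{k'} ≤ u also satisfies S_{k'} ≤ l', provided every assignment satisfying S_k ≤ u satisfies S_k ≤ l. -/
/-- Shift of degree interval across skipped variables: if `S_k ≤ u` and `S_{k'} ≤ u` are
equivalent Boolean functions (`k' < k`), every assignment satisfying `S_k ≤ u` satisfies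
`S_k ≤ l`, and `l' = l + Σ_{i=k'}^{k−1} wᵢ`, then every 0-1 assignment satisfying
`S_{k'} ≤ u` also satisfies `S_{k'} ≤ l'`, where `S_j = Σ_{i≥j} wᵢ bᵢ`. -/
theorem stmt15 (n k k' : ℕ) (hk : k' < k) (w : ℕ → ℕ) (l u l' : ℤ)
    (hl' : l' = l + ∑ i ∈ Finset.Ico k' k, (w i : ℤ))
    (hequiv : ∀ β : ℕ → ℕ, (∀ i, β i ≤ 1) →
      (((∑ i ∈ Finset.Icc k n, w i * β i : ℕ) : ℤ) ≤ u ↔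
        ((∑ i ∈ Finset.Icc k' n, w i * β i : ℕ) : ℤ) ≤ u))
    (hdeg : ∀ β : ℕ → ℕ, (∀ i, β i ≤ 1) →
      ((∑ i ∈ Finset.Icc k n, w i * β i : ℕ) : ℤ) ≤ u →
      ((∑ i ∈ Finset.Icc k n, w i * β i : ℕ) : ℤ) ≤ l) :
    ∀ β : ℕ → ℕ, (∀ i, β i ≤ 1) →
      ((∑ i ∈ Finset.Icc k' n, w i * β i : ℕ) : ℤ) ≤ u →
      ((∑ i ∈ Finset.Icc k' n, w i * β i : ℕ) : ℤ) ≤ l' := by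
  intro β hβ hu
  have hkl : ((∑ i ∈ Finset.Icc k n, w i * β i : ℕ) : ℤ) ≤ l :=
    hdeg β hβ ((hequiv β hβ).mpr hu)
  have hsub : ∑ i ∈ Finset.Icc k' n, w i * β i ≤
      ∑ i ∈ Finset.Ico k' k, w i * β i + ∑ i ∈ Finset.Icc k n, w i * β i := by
    rw [← Finset.sum_union (by
      rw [Finset.disjoint_left]; intro i hi hj
      simp only [Finset.mem_Ico, Finset.mem_Icc] at hi hj; omega)]
    apply Finset.sum_le_sum_of_subset
    intro i hi
    simp only [Finset.mem_Icc, Finset.mem_union, Finset.mem_Ico] at *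
    omega
  have h2 : ∑ i ∈ Finset.Ico k' k, w i * β i ≤ ∑ i ∈ Finset.Ico k' k, w i :=
    Finset.sum_le_sum fun i _ => by
      calc w i * β i ≤ w i * 1 := Nat.mul_le_mul_left _ (hβ i)
      _ = w i := Nat.mul_one _
  have h3 : ((∑ i ∈ Finset.Ico k' k, w i : ℕ) : ℤ) = ∑ i ∈ Finset.Ico k' k, (w i : ℤ) := by
    push_cast; ring
  have h4 : ((∑ i ∈ Finset.Icc k' n, w i * β i : ℕ) : ℤ) ≤
      ((∑ i ∈ Finset.Ico k' k, w i : ℕ) : ℤ) + ((∑ i ∈ Finset.Icc k n, w i * β i : ℕ) : ℤ) := by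
    have := le_trans hsub (Nat.add_le_add_right h2 _)
    exact_mod_cast this
  rw [hl']; linarith
end

section
/- MDD degree-interval combination: let X_k be a nonempty finite set of indices with the at-most-one constraint Σ_{i∈X_k} b_i ≤ 1, and suppose {[l_i,u_i] : i ∈ X_k} ∪ {[l_e,u_e]} are degree intervals for T = Σ_{j>k} Σ_{i∈X_j} w_i b_i. Then [max({l_i + w_i : i ∈ X_k} ∪ {l_e}), min({u_i + w_i : i ∈ X_k} ∪ {u_e})] is a degree interval for S = Σ_{i∈X_k} w_i b_i + T, over all 0-1 assignments satisfying the at-most-one constraint. -/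
/-- MDD degree-interval combination: with the at-most-one side constraint
`Σ_{i∈X_k} b_i ≤ 1`, if `{[l_i,u_i] : i ∈ X_k} ∪ {[l_e,u_e]}` are degree intervals for
`T = Σ_{j>k} Σ_{i∈X_j} w_i b_i`, then
`[max({l_i + w_i} ∪ {l_e}), min({u_i + w_i} ∪ {u_e})]` is a degree interval for
`S = Σ_{i∈X_k} w_i b_i + T` over assignments satisfying the at-most-one constraint. -/
theorem stmt17 {ι : Type*} (X : ℕ → Finset ι) (k m : ℕ) (hX : (X k).Nonempty)
    (w : ι → ℕ) (lI uI : ι → ℤ) (le ue : ℤ)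
    (hIne : ∀ i ∈ X k, lI i ≤ uI i) (hEne : le ≤ ue)
    (hI : ∀ i ∈ X k, ∀ A : ℤ, lI i ≤ A → A ≤ uI i →
      ∀ β : ι → ℕ, (∀ j, β j ≤ 1) → (∑ i ∈ X k, β i ≤ 1) →
      (((∑ j ∈ Finset.Icc (k+1) m, ∑ i ∈ X j, w i * β i : ℕ) : ℤ) ≤ A ↔
        ((∑ j ∈ Finset.Icc (k+1) m, ∑ i ∈ X j, w i * β i : ℕ) : ℤ) ≤ uI i))
    (hE : ∀ A : ℤ, le ≤ A → A ≤ ue →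
      ∀ β : ι → ℕ, (∀ j, β j ≤ 1) → (∑ i ∈ X k, β i ≤ 1) →
      (((∑ j ∈ Finset.Icc (k+1) m, ∑ i ∈ X j, w i * β i : ℕ) : ℤ) ≤ A ↔
        ((∑ j ∈ Finset.Icc (k+1) m, ∑ i ∈ X j, w i * β i : ℕ) : ℤ) ≤ ue)) :
    ∀ A : ℤ,
      max ((X k).sup' hX fun i => lI i + (w i : ℤ)) le ≤ A →
      A ≤ min ((X k).inf' hX fun i => uI i + (w i : ℤ)) ue →
      ∀ β : ι → ℕ, (∀ j, β j ≤ 1) → (∑ i ∈ X k, β i ≤ 1) →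
      ((((∑ i ∈ X k, w i * β i) + ∑ j ∈ Finset.Icc (k+1) m, ∑ i ∈ X j, w i * β i : ℕ) : ℤ) ≤ A ↔
        (((∑ i ∈ X k, w i * β i) + ∑ j ∈ Finset.Icc (k+1) m, ∑ i ∈ X j, w i * β i : ℕ) : ℤ) ≤
          min ((X k).inf' hX fun i => uI i + (w i : ℤ)) ue) := by
  intro A hAl hAu β hβ hsum
  set T : ℕ := ∑ j ∈ Finset.Icc (k+1) m, ∑ i ∈ X j, w i * β i with hT
  set U : ℤ := min ((X k).inf' hX fun i => uI i + (w i : ℤ)) ue with hU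
  have hUue : U ≤ ue := min_le_right _ _
  have hleA : le ≤ A := Trans.trans (le_max_right _ _) hAl
  have hAue : A ≤ ue := Trans.trans hAu hUue
  have hleU : le ≤ U := Trans.trans hleA hAu
  classical
  rcases Nat.le_one_iff_eq_zero_or_eq_one.mp hsum with h | h
  · have hall : ∀ i ∈ X k, β i = 0 := fun i hi =>
      (Finset.sum_eq_zero_iff).mp h i hi
    have hc0 : (∑ i ∈ X k, w i * β i) = 0 :=
      Finset.sum_eq_zero fun i hi => by simp [hall i hi]
    have H1 := hE A hleA hAue β hβ hsum
    have H2 := hE U hleU hUue β hβ hsum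
    rw [hc0, zero_add]
    exact H1.trans H2.symm
  · -- exactly one i0 with β i0 = 1
    obtain ⟨i0, hi0, hβi0⟩ : ∃ i ∈ X k, β i ≠ 0 := by
      by_contra hcon
      push_neg at hcon
      simp [Finset.sum_eq_zero hcon] at h
    have hβi1 : β i0 = 1 := Nat.le_antisymm (hβ i0) (Nat.one_le_iff_ne_zero.mpr hβi0)
    have hrest : ∀ i ∈ X k, i ≠ i0 → β i = 0 := by
      intro i hi hne
      by_contra hne0
      have h2 : 2 ≤ ∑ i ∈ X k, β i := by
        have := Finset.add_sum_erase (X k) β hi0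
        have hi' : i ∈ (X k).erase i0 := Finset.mem_erase.mpr ⟨hne, hi⟩
        have := Finset.single_le_sum (f := β) (fun j _ => Nat.zero_le _) hi'
        omega
      omega
    have hc : (∑ i ∈ X k, w i * β i) = w i0 := by
      rw [← Finset.add_sum_erase (X k) _ hi0, hβi1]
      have : ∑ i ∈ (X k).erase i0, w i * β i = 0 :=
        Finset.sum_eq_zero fun i hi => by
          obtain ⟨hne, hmem⟩ := Finset.mem_erase.mp hi
          simp [hrest i hmem hne]
      omega
    have hl : lI i0 + (w i0 : ℤ) ≤ A :=
      Trans.trans (Trans.trans (Finset.le_sup' _ hi0) (le_max_left _ _)) hAl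
    have hu : U ≤ uI i0 + (w i0 : ℤ) :=
      Trans.trans (min_le_left _ _) (Finset.inf'_le (fun i => uI i + (w i : ℤ)) hi0)
    have H1 := hI i0 hi0 (A - w i0) (by linarith) (by linarith [Trans.trans hAu hu]) β hβ hsum
    have H2 := hI i0 hi0 (U - w i0) (by linarith [Trans.trans hAl hAu]) (by linarith) β hβ hsum
    rw [hc, Nat.cast_add]
    omega
end
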